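/- For block sizes (2,1,3,2), the polynomial L_{(4,7)} = x_{3,4}x_{4,7} + x_{3,5}x_{5,7} + x_{3,6}x_{6,7} is invariant under conjugation of the generic nilradical 8×8 matrix by every upper unitriangular matrix. -/
import Mathlib

open Matrix Finset

/-- Block map for the block sizes `(2,1,3,2)` of `gl(8)`:
blocks `{1,2}, {3}, {4,5,6}, {7,8}`. -/
def blk8 (i : Fin 8) : ℕ :=
  if (i : ℕ) < 2 then 0 else if (i : ℕ) < 3 then 1 else if (i : ℕ) < 6 then 2 else 3

/-- `L_{(4,7)} = x_{3,4} x_{4,7} + x_{3,5} x_{5,7} + x_{3,6} x_{6,7}`. -/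
def L47 {K : Type*} [Field K] (X : Matrix (Fin 8) (Fin 8) K) : K :=
  X 2 3 * X 3 6 + X 2 4 * X 4 6 + X 2 5 * X 5 6

lemma blk8_mono : ∀ a b : Fin 8, a ≤ b → blk8 a ≤ blk8 b := by decide

lemma L47_eq_sq {K : Type*} [Field K] (Z : Matrix (Fin 8) (Fin 8) K)
    (hZ : ∀ a b : Fin 8, ¬ blk8 a < blk8 b → Z a b = 0) :
    L47 Z = (Z * Z) 2 6 := by
  have h0 : Z 2 0 = 0 := hZ _ _ (by decide)
  have h1 : Z 2 1 = 0 := hZ _ _ (by decide)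
  have h2 : Z 2 2 = 0 := hZ _ _ (by decide)
  have h6 : Z 6 6 = 0 := hZ _ _ (by decide)
  have h7 : Z 7 6 = 0 := hZ _ _ (by decide)
  simp [L47, Matrix.mul_apply, Fin.sum_univ_eight, h0, h1, h2, h6, h7]

/-- For block sizes `(2,1,3,2)`, the polynomial `L_{(4,7)}` is invariant under
conjugation of the generic nilradical matrix by every upper unitriangular matrix. -/
theorem L47_N_invariant {K : Type*} [Field K] [CharZero K]
    (X g : Matrix (Fin 8) (Fin 8) K)
    (hX : ∀ a b : Fin 8, ¬ blk8 a < blk8 b → X a b = 0)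
    (hg : ∀ a b : Fin 8, b < a → g a b = 0) (hg1 : ∀ a : Fin 8, g a a = 1) :
    L47 (g * X * g⁻¹) = L47 X := by
  have hgbt : g.BlockTriangular id := fun i j h => hg i j h
  have hdet : IsUnit g.det := by
    rw [Matrix.det_of_upperTriangular hgbt]
    simp [hg1]
  have hinv : Invertible g := g.invertibleOfIsUnitDet hdet
  set h := g⁻¹ with hh_def
  have hhbt : h.BlockTriangular id := blockTriangular_inv_of_blockTriangular hgbt
  have hh : ∀ a b : Fin 8, b < a → h a b = 0 := fun a b hab => hhbt hab
  have hgh : g * h = 1 := mul_nonsing_inv g hdet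
  have hhg : h * g = 1 := nonsing_inv_mul g hdet
  have hh1 : ∀ a : Fin 8, h a a = 1 := by
    intro a
    have hE := congrArg (fun M => M a a) hgh
    simp only [Matrix.mul_apply, Matrix.one_apply_eq] at hE
    rw [Finset.sum_eq_single a] at hE
    · rw [hg1] at hE; simpa using hE
    · intro k _ hk
      rcases lt_or_gt_of_ne hk with hlt | hlt
      · rw [hg a k hlt, zero_mul]
      · rw [hh k a hlt, mul_zero]
    · simp
  -- the conjugate lies in the nilradical
  have hY : ∀ a b : Fin 8, ¬ blk8 a < blk8 b → (g * X * h) a b = 0 := by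
    intro a b hab
    simp only [Matrix.mul_apply, Finset.sum_mul]
    apply Finset.sum_eq_zero; intro k _
    apply Finset.sum_eq_zero; intro j _
    rcases lt_or_ge j a with hj | hj
    · rw [hg a j hj]; ring
    rcases lt_or_ge b k with hk | hk
    · rw [hh k b hk]; ring
    by_cases hx : blk8 j < blk8 k
    · exact absurd (lt_of_le_of_lt (blk8_mono a j hj)
        (lt_of_lt_of_le hx (blk8_mono k b hk))) hab
    · rw [hX j k hx]; ring
  -- the square of the generic matrix
  set A := X * X with hA_def
  have hA : ∀ j k : Fin 8, ¬ blk8 j + 1 < blk8 k → A j k = 0 := by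
    intro j k hjk
    rw [hA_def, Matrix.mul_apply]
    apply Finset.sum_eq_zero; intro m _
    by_cases h1 : blk8 j < blk8 m
    · by_cases h2 : blk8 m < blk8 k
      · omega
      · rw [hX m k h2, mul_zero]
    · rw [hX j m h1, zero_mul]
  -- the key invariance of the (2,6) entry of the square
  have key : (g * A * h) 2 6 = A 2 6 := by
    rw [Matrix.mul_apply, Finset.sum_eq_single 6]
    · rw [hh1, mul_one, Matrix.mul_apply, Finset.sum_eq_single 2]
      · rw [hg1, one_mul]
      · intro j _ hj
        rcases lt_or_gt_of_ne hj with hlt | hlt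
        · rw [hg 2 j hlt, zero_mul]
        · have h3 : (3 : Fin 8) ≤ j := hlt
          have := blk8_mono 3 j h3
          rw [hA j 6 (by simp only [show blk8 3 = 2 from rfl, show blk8 6 = 3 from rfl] at *; omega),
            mul_zero]
      · simp
    · intro k _ hk
      rcases lt_or_gt_of_ne hk with hlt | hlt
      · have hk5 : k ≤ 5 := by omega
        have hbk : blk8 k ≤ 2 := le_trans (blk8_mono k 5 hk5) (by decide)
        rw [Matrix.mul_apply, Finset.sum_eq_zero, zero_mul]
        intro j _
        rcases lt_or_ge j 2 with hj | hj
        · rw [hg 2 j hj, zero_mul]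
        · have hbj : 1 ≤ blk8 j := le_trans (by decide) (blk8_mono 2 j hj)
          rw [hA j k (by omega), mul_zero]
      · rw [hh k 6 hlt, mul_zero]
    · simp
  have hmul : (g * X * h) * (g * X * h) = g * A * h := by
    calc (g * X * h) * (g * X * h) = g * (X * ((h * g) * (X * h))) := by
          simp only [Matrix.mul_assoc]
      _ = g * A * h := by rw [hhg, one_mul, hA_def]; simp only [Matrix.mul_assoc]
  rw [L47_eq_sq (g * X * h) hY, hmul, key, L47_eq_sq X hX]
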